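/- (Theorem 5.) Let d ≥ 1, p ∈ [1,∞], let w ∈ ℝ^d with w ≠ 0, b ∈ ℝ, ε > 0, δ ≥ 0, and consider balanced Gaussian mixture data with means μ₊, μ₋ and σ > 0, with μ = (μ₊ − μ₋)/2 ≠ 0 and μ₀ = μ/‖μ‖₂. Let u_p be any point of the compact convex set D_{ε,δ|p} = {v ∈ ℝ^d : ‖v‖_p ≤ ε and |v·μ₀| ≤ δ} at which v ↦ w·v attains its maximum over D_{ε,δ|p}. Define the overall (ε,δ)-ℓp-strong-adversarial rate p_{s-adv|p} = (1/2)·P_{N(μ₊,σ²I_d)}({x : w·x + b > 0 and there exists v ∈ D_{ε,δ|p} with w·(x+v) + b ≤ 0}) + (1/2)·P_{N(μ₋,σ²I_d)}({x : w·x + b ≤ 0 and there exists v ∈ D_{ε,δ|p} with w·(x+v) + b > 0}). Then p_{s-adv|p} = 1 − p_m − (1/2)[Φ((w·μ + b')/(‖w‖₂σ) − (w·u_p)/(‖w‖₂σ)) + Φ((w·μ − b')/(‖w‖₂σ) − (w·u_p)/(‖w‖₂σ))], where p_m = 1 − (1/2)[Φ((w·μ + b')/(‖w‖₂σ)) + Φ((w·μ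 − b')/(‖w‖₂σ))]. -/

import Mathlib

open MeasureTheory ProbabilityTheory
open scoped ENNReal NNReal

/-- Euclidean inner product on `ℝ^d`. -/
noncomputable def dotp {d : ℕ} (w x : Fin d → ℝ) : ℝ := ∑ i, w i * x i

/-- The `ℓ₂` norm on `ℝ^d`. -/
noncomputable def l2 {d : ℕ} (w : Fin d → ℝ) : ℝ := Real.sqrt (∑ i, (w i)^2)

/-- The product Gaussian measure `N(m, σ²I_d)` on `ℝ^d`. -/
noncomputable def gaussPi {d : ℕ} (m : Fin d → ℝ) (σ : ℝ) : Measure (Fin d → ℝ) :=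
  Measure.pi fun i => gaussianReal (m i) ((σ^2).toNNReal)

/-- The standard normal cumulative distribution function `Φ`. -/
noncomputable def Phi (x : ℝ) : ℝ := ((gaussianReal 0 1) (Set.Iic x)).toReal

/-- The `ℓp` norm on `ℝ^d` for `p ∈ [1,∞]` (as an extended real exponent). -/
noncomputable def lpnorm {d : ℕ} (p : ℝ≥0∞) (v : Fin d → ℝ) : ℝ :=
  if p = ∞ then ⨆ i, |v i| else (∑ i, |v i| ^ p.toReal) ^ (1 / p.toReal)

/-- The `ℓp` norm on `ℝ^d` for a real exponent `p ∈ [1,∞)`. -/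
noncomputable def lpR {d : ℕ} (p : ℝ) (v : Fin d → ℝ) : ℝ := (∑ i, |v i| ^ p) ^ (1/p)

open Real

lemma integral_rexp_quadratic {b : ℝ} (hb : b < 0) (c : ℝ) :
    ∫ x : ℝ, Real.exp (b * x ^ 2 + c * x) = Real.sqrt (π / (-b)) * Real.exp (-(c ^ 2) / (4 * b)) := by
  have hb0 : b ≠ 0 := hb.ne
  have h : ∀ x : ℝ, b * x ^ 2 + c * x = b * (x + c / (2 * b)) ^ 2 + (-(c ^ 2) / (4 * b)) := by
    intro x; field_simp; ring
  simp_rw [h, Real.exp_add]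
  rw [MeasureTheory.integral_mul_const]
  rw [integral_add_right_eq_self (fun y : ℝ => Real.exp (b * y ^ 2)) (c / (2 * b))]
  have : ∀ y : ℝ, b * y ^ 2 = -(-b) * y ^ 2 := by intro y; ring
  simp_rw [this]
  rw [integral_gaussian]

lemma gaussianPDFReal_conv (m₁ m₂ : ℝ) {v₁ v₂ : ℝ≥0} (h₁ : v₁ ≠ 0) (h₂ : v₂ ≠ 0) (x : ℝ) :
    ∫ t : ℝ, gaussianPDFReal m₁ v₁ t * gaussianPDFReal m₂ v₂ (x - t)
      = gaussianPDFReal (m₁ + m₂) (v₁ + v₂) x := by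
  have hV1 : (0:ℝ) < v₁ := lt_of_le_of_ne v₁.coe_nonneg (by exact_mod_cast (Ne.symm h₁))
  have hV2 : (0:ℝ) < v₂ := lt_of_le_of_ne v₂.coe_nonneg (by exact_mod_cast (Ne.symm h₂))
  set V1 : ℝ := (v₁ : ℝ) with hV1def
  set V2 : ℝ := (v₂ : ℝ) with hV2def
  have h1 : V1 ≠ 0 := hV1.ne'
  have h2 : V2 ≠ 0 := hV2.ne'
  have h3 : V1 + V2 ≠ 0 := by positivity
  set b : ℝ := -(1/(2*V1) + 1/(2*V2)) with hbdef
  set c : ℝ := m₁/V1 + (x - m₂)/V2 with hcdef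
  set d₀ : ℝ := -(m₁^2/(2*V1) + (x - m₂)^2/(2*V2)) with hd0def
  have hb : b < 0 := by
    have h : 0 < 1/(2*V1) + 1/(2*V2) := by positivity
    rw [hbdef]; linarith
  have key : ∀ t : ℝ, gaussianPDFReal m₁ v₁ t * gaussianPDFReal m₂ v₂ (x - t)
      = ((Real.sqrt (2*π*V1))⁻¹ * (Real.sqrt (2*π*V2))⁻¹ * Real.exp d₀)
        * Real.exp (b*t^2 + c*t) := by
    intro t
    have harg : -(t - m₁)^2/(2*V1) + -(x - t - m₂)^2/(2*V2) = d₀ + (b*t^2 + c*t) := by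
      rw [hd0def, hbdef, hcdef]; field_simp; ring
    rw [gaussianPDFReal, gaussianPDFReal, mul_mul_mul_comm, ← Real.exp_add]
    rw [show ((v₁:ℝ)) = V1 from rfl, show ((v₂:ℝ)) = V2 from rfl, harg, Real.exp_add]
    ring
  simp_rw [key]
  rw [MeasureTheory.integral_const_mul, integral_rexp_quadratic hb]
  rw [gaussianPDFReal]
  have hVsum : (((v₁ + v₂ : ℝ≥0)) : ℝ) = V1 + V2 := by push_cast; ring
  rw [hVsum]
  have hconst : (Real.sqrt (2*π*V1))⁻¹ * (Real.sqrt (2*π*V2))⁻¹ * Real.sqrt (π / (-b))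
      = (Real.sqrt (2*π*(V1+V2)))⁻¹ := by
    rw [← Real.sqrt_inv, ← Real.sqrt_inv, ← Real.sqrt_mul (by positivity),
      ← Real.sqrt_mul (by positivity), ← Real.sqrt_inv]
    congr 1
    rw [hbdef]
    field_simp
    ring
  have hexp : d₀ + (-(c^2)/(4*b)) = -(x - (m₁+m₂))^2 / (2*(V1+V2)) := by
    rw [hd0def, hcdef, hbdef]
    have hb4 : 4*(-(1/(2*V1) + 1/(2*V2))) = -(2*(V1+V2))/(V1*V2) := by field_simp; ring
    rw [hb4, div_div_eq_mul_div]
    field_simp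
    ring
  calc (Real.sqrt (2*π*V1))⁻¹ * (Real.sqrt (2*π*V2))⁻¹ * Real.exp d₀
        * (Real.sqrt (π / (-b)) * Real.exp (-(c^2)/(4*b)))
      = ((Real.sqrt (2*π*V1))⁻¹ * (Real.sqrt (2*π*V2))⁻¹ * Real.sqrt (π / (-b)))
        * Real.exp (d₀ + (-(c^2)/(4*b))) := by rw [Real.exp_add]; ring
    _ = (Real.sqrt (2*π*(V1+V2)))⁻¹ * Real.exp (-(x - (m₁+m₂))^2 / (2*(V1+V2))) := by
        rw [hconst, hexp]

lemma gaussianReal_conv_ne (m₁ m₂ : ℝ) {v₁ v₂ : ℝ≥0} (h₁ : v₁ ≠ 0) (h₂ : v₂ ≠ 0) :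
    Measure.map (fun p : ℝ × ℝ => p.1 + p.2) ((gaussianReal m₁ v₁).prod (gaussianReal m₂ v₂))
      = gaussianReal (m₁ + m₂) (v₁ + v₂) := by
  have h12 : v₁ + v₂ ≠ 0 := by simp [h₁]
  have hm1 : Measurable (gaussianPDFReal m₁ v₁) := measurable_gaussianPDFReal _ _
  have hm2 : Measurable (gaussianPDFReal m₂ v₂) := measurable_gaussianPDFReal _ _
  have hmprod : Measurable (fun p : ℝ × ℝ =>
      ENNReal.ofReal (gaussianPDFReal m₁ v₁ p.1 * gaussianPDFReal m₂ v₂ (p.2 - p.1))) :=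
    ((hm1.comp measurable_fst).mul (hm2.comp (measurable_snd.sub measurable_fst))).ennreal_ofReal
  ext s hs
  rw [Measure.map_apply measurable_add hs, Measure.prod_apply (measurable_add hs),
    gaussianReal_apply _ h12]
  have step1 : ∀ x : ℝ, gaussianReal m₂ v₂ (Prod.mk x ⁻¹' ((fun p : ℝ × ℝ => p.1 + p.2) ⁻¹' s))
      = ∫⁻ y in s, ENNReal.ofReal (gaussianPDFReal m₂ v₂ (y - x)) := by
    intro x
    have h : Prod.mk x ⁻¹' ((fun p : ℝ × ℝ => p.1 + p.2) ⁻¹' s) = (fun y => x + y) ⁻¹' s := rfl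
    rw [h, ← Measure.map_apply (measurable_const_add x) hs, gaussianReal_map_const_add,
      gaussianReal_apply _ h₂]
    congr 1
    ext y
    rw [gaussianPDF, ← gaussianPDFReal_sub]
  simp_rw [step1]
  rw [gaussianReal_of_var_ne_zero _ h₁, gaussianPDF_def,
    lintegral_withDensity_eq_lintegral_mul _ hm1.ennreal_ofReal (by
      apply Measurable.lintegral_prod_right
      exact (hm2.comp (measurable_snd.sub measurable_fst)).ennreal_ofReal)]
  simp only [Pi.mul_apply]
  have step2 : ∀ x : ℝ, ENNReal.ofReal (gaussianPDFReal m₁ v₁ x)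
        * ∫⁻ y in s, ENNReal.ofReal (gaussianPDFReal m₂ v₂ (y - x))
      = ∫⁻ y in s, ENNReal.ofReal (gaussianPDFReal m₁ v₁ x * gaussianPDFReal m₂ v₂ (y - x)) := by
    intro x
    have hmx : Measurable fun y : ℝ => ENNReal.ofReal (gaussianPDFReal m₂ v₂ (y - x)) :=
      (hm2.comp (measurable_sub_const x)).ennreal_ofReal
    rw [← lintegral_const_mul _ hmx]
    congr 1; ext y
    rw [ENNReal.ofReal_mul (gaussianPDFReal_nonneg _ _ _)]
  simp_rw [step2]
  rw [lintegral_lintegral_swap hmprod.aemeasurable]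
  congr 1; ext y
  have hbnd : ∀ x : ℝ, ‖gaussianPDFReal m₂ v₂ (y - x)‖ ≤ (Real.sqrt (2*π*(v₂:ℝ)))⁻¹ := by
    intro x
    rw [Real.norm_eq_abs, abs_of_nonneg (gaussianPDFReal_nonneg _ _ _), gaussianPDFReal]
    have h0 : Real.exp (-(y - x - m₂)^2 / (2*(v₂:ℝ))) ≤ 1 := by
      apply Real.exp_le_one_iff.mpr
      apply div_nonpos_of_nonpos_of_nonneg (neg_nonpos.mpr (sq_nonneg _)) (by positivity)
    have hp : (0:ℝ) ≤ (Real.sqrt (2*π*(v₂:ℝ)))⁻¹ := by positivity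
    calc (Real.sqrt (2*π*(v₂:ℝ)))⁻¹ * Real.exp (-(y - x - m₂)^2 / (2*(v₂:ℝ)))
        ≤ (Real.sqrt (2*π*(v₂:ℝ)))⁻¹ * 1 := by gcongr
      _ = (Real.sqrt (2*π*(v₂:ℝ)))⁻¹ := mul_one _
  have hint : Integrable (fun x => gaussianPDFReal m₁ v₁ x * gaussianPDFReal m₂ v₂ (y - x)) := by
    have := Integrable.bdd_mul (c := (Real.sqrt (2*π*(v₂:ℝ)))⁻¹)
      (integrable_gaussianPDFReal m₁ v₁)
      ((hm2.comp (measurable_const.sub measurable_id)).aestronglyMeasurable)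
      (ae_of_all _ hbnd)
    simpa [mul_comm] using this
  rw [← ofReal_integral_eq_lintegral_ofReal hint (ae_of_all _ fun x =>
    mul_nonneg (gaussianPDFReal_nonneg _ _ _) (gaussianPDFReal_nonneg _ _ _))]
  rw [gaussianPDFReal_conv m₁ m₂ h₁ h₂ y]
  rfl

lemma gaussianReal_conv' (m₁ m₂ : ℝ) (v₁ v₂ : ℝ≥0) :
    Measure.map (fun p : ℝ × ℝ => p.1 + p.2) ((gaussianReal m₁ v₁).prod (gaussianReal m₂ v₂))
      = gaussianReal (m₁ + m₂) (v₁ + v₂) := by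
  by_cases h₁ : v₁ = 0
  · subst h₁
    rw [gaussianReal_zero_var, Measure.dirac_prod, Measure.map_map measurable_add (by fun_prop)]
    have : ((fun p : ℝ × ℝ => p.1 + p.2) ∘ fun y => (m₁, y)) = fun y => m₁ + y := rfl
    rw [this, gaussianReal_map_const_add, add_comm m₂ m₁, zero_add]
  by_cases h₂ : v₂ = 0
  · subst h₂
    rw [gaussianReal_zero_var, Measure.prod_dirac, Measure.map_map measurable_add (by fun_prop)]
    have : ((fun p : ℝ × ℝ => p.1 + p.2) ∘ fun x => (x, m₂)) = fun x => x + m₂ := rfl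
    rw [this, gaussianReal_map_add_const, add_zero]
  exact gaussianReal_conv_ne m₁ m₂ h₁ h₂

lemma measurable_dotp {d : ℕ} (w : Fin d → ℝ) : Measurable (fun x : Fin d → ℝ => dotp w x) := by
  unfold dotp
  exact Finset.measurable_sum _ fun i _ => by fun_prop

lemma gaussPi_map_dotp : ∀ {d : ℕ} (w m : Fin d → ℝ) (σ : ℝ),
    (gaussPi m σ).map (fun x => dotp w x)
      = gaussianReal (dotp w m) (∑ i, (σ^2).toNNReal * (w i ^ 2).toNNReal) := by
  intro d
  induction d with
  | zero =>
    intro w m σ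
    have : (fun x : Fin 0 → ℝ => dotp w x) = fun _ => (0:ℝ) := by
      ext x; simp [dotp]
    rw [this]
    have : IsProbabilityMeasure (gaussPi m σ) := by unfold gaussPi; infer_instance
    rw [Measure.map_const]
    simp [dotp]
  | succ n ih =>
    intro w m σ
    set V : ℝ≥0 := (σ^2).toNNReal with hV
    set w' : Fin n → ℝ := fun j => w j.succ with hw'
    set m' : Fin n → ℝ := fun j => m j.succ with hm'
    have hmp := measurePreserving_piFinSuccAbove
      (fun i : Fin (n+1) => gaussianReal (m i) V) 0
    set e := MeasurableEquiv.piFinSuccAbove (fun _ : Fin (n+1) => ℝ) 0 with he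
    have hcomp : (fun x : Fin (n+1) → ℝ => dotp w x)
        = (fun p : ℝ × (Fin n → ℝ) => w 0 * p.1 + dotp w' p.2) ∘ e := by
      ext x
      simp only [Function.comp_apply, he, MeasurableEquiv.piFinSuccAbove,
        MeasurableEquiv.coe_mk, dotp]
      rw [Fin.sum_univ_succ]
      simp [Fin.succAbove, w', Fin.tail]
    have hmeas2 : Measurable (fun p : ℝ × (Fin n → ℝ) => w 0 * p.1 + dotp w' p.2) :=
      (measurable_fst.const_mul _).add ((measurable_dotp w').comp measurable_snd)
    have hgauss : gaussPi m σ = Measure.pi fun i : Fin (n+1) => gaussianReal (m i) V := rfl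
    rw [hgauss, hcomp, ← Measure.map_map hmeas2 e.measurable, hmp.map_eq]
    have hpi : (Measure.pi fun j : Fin n => gaussianReal (m ((0:Fin (n+1)).succAbove j)) V)
        = gaussPi m' σ := by
      unfold gaussPi
      rw [← hV]
      congr 1
    have hprob : IsProbabilityMeasure (gaussPi m' σ) := by unfold gaussPi; infer_instance
    rw [hpi]
    have hsplit : (fun p : ℝ × (Fin n → ℝ) => w 0 * p.1 + dotp w' p.2)
        = (fun q : ℝ × ℝ => q.1 + q.2) ∘ (Prod.map (fun t : ℝ => w 0 * t) (fun x => dotp w' x)) := by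
      ext p; simp
    rw [hsplit, ← Measure.map_map measurable_add (Measurable.prodMap (measurable_const_mul _)
      (measurable_dotp w'))]
    rw [← Measure.map_prod_map _ _ (measurable_const_mul _) (measurable_dotp w')]
    rw [gaussianReal_map_const_mul, ih w' m' σ, gaussianReal_conv']
    congr 1
    · simp [dotp, Fin.sum_univ_succ, w', m']
    · rw [Fin.sum_univ_succ]
      congr 1
      ext
      push_cast
      rw [Real.coe_toNNReal _ (sq_nonneg _), Real.coe_toNNReal _ (sq_nonneg _)]
      ring

lemma gaussianReal_map_affine (m : ℝ) {v : ℝ≥0} (hv : v ≠ 0) :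
    (gaussianReal 0 1).map (fun y => Real.sqrt v * y + m) = gaussianReal m v := by
  have hvpos : (0:ℝ) < v := lt_of_le_of_ne v.coe_nonneg (by exact_mod_cast (Ne.symm hv))
  have h2 : (gaussianReal 0 1).map (fun y : ℝ => Real.sqrt v * y) = gaussianReal 0 v := by
    have h := gaussianReal_map_const_mul (μ := 0) (v := 1) (Real.sqrt v)
    have hvv : (NNReal.mk ((Real.sqrt v)^2) (sq_nonneg _)) * 1 = v := by
      rw [mul_one]; ext; exact Real.sq_sqrt v.coe_nonneg
    rw [hvv, mul_zero] at h
    exact h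
  have hcomp : (fun y : ℝ => Real.sqrt v * y + m)
      = (fun z : ℝ => z + m) ∘ (fun y : ℝ => Real.sqrt v * y) := rfl
  rw [hcomp, ← Measure.map_map (measurable_add_const m) (measurable_const_mul _), h2,
    gaussianReal_map_add_const, zero_add]

lemma gaussianReal_Iic_toReal (m : ℝ) {v : ℝ≥0} (hv : v ≠ 0) (a : ℝ) :
    ((gaussianReal m v) (Set.Iic a)).toReal = Phi ((a - m) / Real.sqrt v) := by
  have hvpos : (0:ℝ) < v := lt_of_le_of_ne v.coe_nonneg (by exact_mod_cast (Ne.symm hv))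
  have hs : (0:ℝ) < Real.sqrt v := Real.sqrt_pos.mpr hvpos
  rw [← gaussianReal_map_affine m hv, Measure.map_apply (by fun_prop) measurableSet_Iic]
  have hpre : (fun y : ℝ => Real.sqrt v * y + m) ⁻¹' (Set.Iic a)
      = Set.Iic ((a - m) / Real.sqrt v) := by
    ext y
    simp only [Set.mem_preimage, Set.mem_Iic]
    rw [le_div_iff₀ hs]
    constructor <;> intro h <;> nlinarith
  rw [hpre]
  rfl

lemma gaussianReal_Ioc_toReal (m : ℝ) {v : ℝ≥0} (hv : v ≠ 0) {a c : ℝ} (hac : a ≤ c) :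
    ((gaussianReal m v) (Set.Ioc a c)).toReal
      = Phi ((c - m) / Real.sqrt v) - Phi ((a - m) / Real.sqrt v) := by
  rw [← Set.Iic_sdiff_Iic, measure_diff (Set.Iic_subset_Iic.mpr hac) measurableSet_Iic.nullMeasurableSet
    (measure_ne_top _ _)]
  rw [ENNReal.toReal_sub_of_le (measure_mono (Set.Iic_subset_Iic.mpr hac)) (measure_ne_top _ _),
    gaussianReal_Iic_toReal m hv, gaussianReal_Iic_toReal m hv]

lemma Phi_neg (x : ℝ) : Phi (-x) = 1 - Phi x := by
  have hmapneg : (gaussianReal 0 1).map (fun y : ℝ => -y) = gaussianReal 0 1 := by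
    have h := gaussianReal_map_const_mul (μ := 0) (v := 1) (-1 : ℝ)
    have h1 : (NNReal.mk ((-1:ℝ)^2) (sq_nonneg _)) * 1 = 1 := by
      rw [mul_one]; ext; show ((-1:ℝ)^2) = ((1:ℝ≥0):ℝ); norm_num
    rw [h1, mul_zero] at h
    have hfun : (fun y : ℝ => -y) = (fun y : ℝ => (-1:ℝ) * y) := by
      funext y; rw [neg_one_mul]
    rw [hfun]
    exact h
  have hIci : (gaussianReal 0 1) (Set.Iic (-x)) = (gaussianReal 0 1) (Set.Ici x) := by
    conv_lhs => rw [← hmapneg]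
    rw [Measure.map_apply measurable_neg measurableSet_Iic]
    congr 1
    ext y
    simp
  have hsing : (gaussianReal 0 1) {x} = 0 :=
    (gaussianReal_absolutelyContinuous 0 one_ne_zero) (volume_singleton)
  have hIioIic : (gaussianReal 0 1) (Set.Iio x) = (gaussianReal 0 1) (Set.Iic x) := by
    rw [← Set.Iio_union_right, measure_union (by simp) (measurableSet_singleton x), hsing,
      add_zero]
  have hcompl : (gaussianReal 0 1) (Set.Ici x) = 1 - (gaussianReal 0 1) (Set.Iic x) := by
    have : Set.Ici x = (Set.Iio x)ᶜ := by simp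
    rw [this, measure_compl measurableSet_Iio (measure_ne_top _ _), measure_univ, hIioIic]
  rw [Phi, hIci, hcompl, ENNReal.toReal_sub_of_le prob_le_one (by simp)]
  simp [Phi]

lemma dotp_add_right {d : ℕ} (w x v : Fin d → ℝ) : dotp w (x + v) = dotp w x + dotp w v := by
  simp only [dotp, Pi.add_apply, mul_add]
  rw [Finset.sum_add_distrib]

lemma dotp_neg_right {d : ℕ} (w v : Fin d → ℝ) : dotp w (-v) = -dotp w v := by
  simp [dotp, Finset.sum_neg_distrib]

lemma dotp_neg_left {d : ℕ} (v u : Fin d → ℝ) : dotp (-v) u = -dotp v u := by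
  simp [dotp, Finset.sum_neg_distrib]

lemma dotp_zero_left {d : ℕ} (u : Fin d → ℝ) : dotp 0 u = 0 := by simp [dotp]

lemma dotp_zero_right {d : ℕ} (w : Fin d → ℝ) : dotp w 0 = 0 := by simp [dotp]

lemma lpnorm_neg {d : ℕ} (p : ℝ≥0∞) (v : Fin d → ℝ) : lpnorm p (-v) = lpnorm p v := by
  unfold lpnorm
  simp [abs_neg]

lemma lpnorm_zero {d : ℕ} (p : ℝ≥0∞) (hp : 1 ≤ p) : lpnorm p (0 : Fin d → ℝ) = 0 := by
  unfold lpnorm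
  split_ifs with h
  · simp only [Pi.zero_apply, abs_zero]
    exact Real.iSup_const_zero
  · have hpt : 0 < p.toReal := ENNReal.toReal_pos (by intro h0; rw [h0] at hp; simp at hp) h
    simp only [Pi.zero_apply, abs_zero]
    rw [Real.zero_rpow hpt.ne', Finset.sum_const, nsmul_eq_mul, mul_zero,
      Real.zero_rpow (by positivity : (1 / p.toReal) ≠ 0)]

/-- Theorem 5: the overall `(ε,δ)`-`ℓp`-strong-adversarial rate
of a linear classifier for balanced Gaussian mixture data, expressed via any
maximizer `u_p` of `v ↦ w·v` over `D_{ε,δ|p}`. -/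
theorem lp_strong_adversarial_rate {d : ℕ} (hd : 1 ≤ d)
    (p : ℝ≥0∞) (hp : 1 ≤ p)
    (w : Fin d → ℝ) (hw : w ≠ 0) (b ε δ : ℝ) (hε : 0 < ε) (hδ : 0 ≤ δ)
    (μp μm : Fin d → ℝ) (σ : ℝ) (hσ : 0 < σ)
    (μ μbar μ₀ : Fin d → ℝ) (b' : ℝ)
    (hμ : μ = (1/2 : ℝ) • (μp - μm)) (hμne : μ ≠ 0) (hμ₀ : μ₀ = (l2 μ)⁻¹ • μ)
    (hμbar : μbar = (1/2 : ℝ) • (μp + μm)) (hb' : b' = dotp w μbar + b)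
    (up : Fin d → ℝ)
    (hup_mem : lpnorm p up ≤ ε ∧ |dotp up μ₀| ≤ δ)
    (hup_max : ∀ v : Fin d → ℝ, lpnorm p v ≤ ε → |dotp v μ₀| ≤ δ →
        dotp w v ≤ dotp w up)
    (psadv pm : ℝ)
    (hpsadv : psadv =
        (1/2) * ((gaussPi μp σ) {x : Fin d → ℝ | 0 < dotp w x + b ∧
            ∃ v : Fin d → ℝ, lpnorm p v ≤ ε ∧ |dotp v μ₀| ≤ δ ∧
              dotp w (x + v) + b ≤ 0}).toReal
      + (1/2) * ((gaussPi μm σ) {x : Fin d → ℝ | dotp w x + b ≤ 0 ∧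
            ∃ v : Fin d → ℝ, lpnorm p v ≤ ε ∧ |dotp v μ₀| ≤ δ ∧
              0 < dotp w (x + v) + b}).toReal)
    (hpm : pm = 1 - (1/2) * (Phi ((dotp w μ + b') / (l2 w * σ)) +
                              Phi ((dotp w μ - b') / (l2 w * σ)))) :
    psadv = 1 - pm - (1/2) *
        (Phi ((dotp w μ + b') / (l2 w * σ) - dotp w up / (l2 w * σ)) +
         Phi ((dotp w μ - b') / (l2 w * σ) - dotp w up / (l2 w * σ))) := by
  -- notation
  set c : ℝ := dotp w up with hc
  set A : ℝ := dotp w μ with hA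
  set s : ℝ := l2 w * σ with hs
  -- c ≥ 0
  have hc0 : 0 ≤ c := by
    have h := hup_max 0 (by rw [lpnorm_zero p hp]; exact hε.le)
      (by rw [dotp_zero_left]; simpa using hδ)
    rw [dotp_zero_right] at h
    exact h
  -- the two sets are slabs
  have hS1 : {x : Fin d → ℝ | 0 < dotp w x + b ∧
      ∃ v : Fin d → ℝ, lpnorm p v ≤ ε ∧ |dotp v μ₀| ≤ δ ∧ dotp w (x + v) + b ≤ 0}
      = (fun x => dotp w x) ⁻¹' (Set.Ioc (-b) (c - b)) := by
    ext x
    simp only [Set.mem_setOf_eq, Set.mem_preimage, Set.mem_Ioc]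
    constructor
    · rintro ⟨hpos, v, hv1, hv2, hv3⟩
      refine ⟨by linarith, ?_⟩
      have hmv := hup_max (-v) (by rwa [lpnorm_neg]) (by rwa [dotp_neg_left, abs_neg])
      rw [dotp_neg_right] at hmv
      rw [dotp_add_right] at hv3
      linarith
    · rintro ⟨h1, h2⟩
      refine ⟨by linarith, -up, by rw [lpnorm_neg]; exact hup_mem.1,
        by rw [dotp_neg_left, abs_neg]; exact hup_mem.2, ?_⟩
      rw [dotp_add_right, dotp_neg_right]
      linarith
  have hS2 : {x : Fin d → ℝ | dotp w x + b ≤ 0 ∧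
      ∃ v : Fin d → ℝ, lpnorm p v ≤ ε ∧ |dotp v μ₀| ≤ δ ∧ 0 < dotp w (x + v) + b}
      = (fun x => dotp w x) ⁻¹' (Set.Ioc (-c - b) (-b)) := by
    ext x
    simp only [Set.mem_setOf_eq, Set.mem_preimage, Set.mem_Ioc]
    constructor
    · rintro ⟨hneg, v, hv1, hv2, hv3⟩
      refine ⟨?_, by linarith⟩
      have hmv := hup_max v hv1 hv2
      rw [dotp_add_right] at hv3
      linarith
    · rintro ⟨h1, h2⟩
      refine ⟨by linarith, up, hup_mem.1, hup_mem.2, ?_⟩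
      rw [dotp_add_right]
      linarith
  -- variance
  set V : ℝ≥0 := ∑ i, (σ^2).toNNReal * ((w i)^2).toNNReal with hV
  have hVcoe : ((V : ℝ≥0) : ℝ) = σ^2 * ∑ i, (w i)^2 := by
    rw [hV, NNReal.coe_sum, Finset.mul_sum]
    apply Finset.sum_congr rfl
    intro i _
    rw [NNReal.coe_mul, Real.coe_toNNReal _ (sq_nonneg σ), Real.coe_toNNReal _ (sq_nonneg (w i))]
  have hwsum : 0 < ∑ i, (w i)^2 := by
    obtain ⟨i₀, hi₀⟩ := Function.ne_iff.mp hw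
    refine Finset.sum_pos' (fun i _ => sq_nonneg _) ⟨i₀, Finset.mem_univ _, ?_⟩
    have : w i₀ ≠ 0 := by simpa using hi₀
    positivity
  have hVpos : (0:ℝ) < (V:ℝ) := by rw [hVcoe]; positivity
  have hVne : V ≠ 0 := by
    have h : (0:ℝ≥0) < V := by exact_mod_cast hVpos
    exact h.ne'
  have hl2 : 0 < l2 w := by rw [l2]; exact Real.sqrt_pos.mpr hwsum
  have hspos : 0 < s := by rw [hs]; exact mul_pos hl2 hσ
  have hsqrtV : Real.sqrt (V:ℝ) = s := by
    rw [hVcoe, hs, l2, Real.sqrt_mul (sq_nonneg σ), Real.sqrt_sq hσ.le]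
    ring
  have hmeas : ∀ (m : Fin d → ℝ) (a e : ℝ), a ≤ e →
      ((gaussPi m σ) ((fun x => dotp w x) ⁻¹' Set.Ioc a e)).toReal
        = Phi ((e - dotp w m)/s) - Phi ((a - dotp w m)/s) := by
    intro m a e hae
    rw [← Measure.map_apply (measurable_dotp w) measurableSet_Ioc, gaussPi_map_dotp,
      ← hV, gaussianReal_Ioc_toReal _ hVne hae, hsqrtV]
  rw [hpsadv, hS1, hS2, hmeas μp _ _ (by linarith), hmeas μm _ _ (by linarith)]
  set M : ℝ := dotp w μbar with hM
  have hfp : μ + μbar = μp := by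
    funext i
    rw [hμ, hμbar]
    simp only [Pi.add_apply, Pi.smul_apply, Pi.sub_apply, smul_eq_mul]
    ring
  have hfm : μ + μm = μbar := by
    funext i
    rw [hμ, hμbar]
    simp only [Pi.add_apply, Pi.smul_apply, Pi.sub_apply, smul_eq_mul]
    ring
  have hmp : dotp w μp = A + M := by rw [← hfp, dotp_add_right]
  have hmm : dotp w μm = M - A := by
    have := dotp_add_right w μ μm
    rw [hfm, ← hA, ← hM] at this
    linarith
  rw [hmp, hmm, hpm]
  have ha1 : (c - b - (A + M))/s = -((A + b' - c)/s) := by rw [hb']; ring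
  have ha2 : (-b - (A + M))/s = -((A + b')/s) := by rw [hb']; ring
  have ha3 : (-b - (M - A))/s = (A - b')/s := by rw [hb']; ring
  have ha4 : (-c - b - (M - A))/s = (A - b' - c)/s := by rw [hb']; ring
  rw [ha1, ha2, ha3, ha4, Phi_neg, Phi_neg, div_sub_div_same, div_sub_div_same]
  ring
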